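/- Let V be the ℚ-vector space with basis A₁, A₂, A₃, B₁, B₂, B₃, C₁, C₂, C₃, E₁, E₂, E₃, equipped with the symmetric bilinear form B determined by: A₁,...,C₃ form a 9-cycle in the listed cyclic order with each self-pairing −2 and consecutive pairings 1; E₁, E₂, E₃ have self-pairing −3 and pairwise pairing 0; E₁·A₂ = E₂·B₂ = E₃·C₂ = 1; E₁·(A₃,B₃,C₃) = (2,1,2), E₂·(A₃,B₃,C₃) = (2,2,1), E₃·(A₃,B₃,C₃) = (1,2,2); and all other pairings among basis vectors are 0. For integers a, b, set v = (1/7)(A₁ + 2A₂ + 3E₁) + (a/7)(B₁ + 2B₂ + 3E₂) + (b/7)(C₁ + 2C₂ + 3E₃) ∈ V. Then B(v, x) ∈ ℤ for all twelve basis vectors x if and only if a ≡ 4 (mod 7) and b ≡ 2 (mod 7). -/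
import Mathlib


/-- The Gram matrix of the twelve curves `A₁, A₂, A₃, B₁, B₂, B₃, C₁, C₂, C₃,
E₁, E₂, E₃` (in this order) on the surface `X` in Case I: the first nine form a
9-cycle of `(-2)`-curves, `E₁, E₂, E₃` are disjoint `(-3)`-curves with
`E₁·A₂ = E₂·B₂ = E₃·C₂ = 1`, `E₁·(A₃,B₃,C₃) = (2,1,2)`,
`E₂·(A₃,B₃,C₃) = (2,2,1)`, `E₃·(A₃,B₃,C₃) = (1,2,2)`,
and all other intersections zero. -/
def gram12 : Matrix (Fin 12) (Fin 12) ℚ :=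
  !![-2, 1, 0, 0, 0, 0, 0, 0, 1, 0, 0, 0;
     1, -2, 1, 0, 0, 0, 0, 0, 0, 1, 0, 0;
     0, 1, -2, 1, 0, 0, 0, 0, 0, 2, 2, 1;
     0, 0, 1, -2, 1, 0, 0, 0, 0, 0, 0, 0;
     0, 0, 0, 1, -2, 1, 0, 0, 0, 0, 1, 0;
     0, 0, 0, 0, 1, -2, 1, 0, 0, 1, 2, 2;
     0, 0, 0, 0, 0, 1, -2, 1, 0, 0, 0, 0;
     0, 0, 0, 0, 0, 0, 1, -2, 1, 0, 0, 1;
     1, 0, 0, 0, 0, 0, 0, 1, -2, 2, 1, 2;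
     0, 1, 2, 0, 0, 1, 0, 0, 2, -3, 0, 0;
     0, 0, 2, 0, 1, 2, 0, 0, 1, 0, -3, 0;
     0, 0, 1, 0, 0, 2, 0, 1, 2, 0, 0, -3]

/-- The symmetric bilinear form on `V = ℚ¹²` with Gram matrix `gram12`. -/
noncomputable def bform12 : LinearMap.BilinForm ℚ (Fin 12 → ℚ) :=
  Matrix.toLinearMap₂' ℚ gram12

/-- The vector
`v = (1/7)(A₁ + 2A₂ + 3E₁) + (a/7)(B₁ + 2B₂ + 3E₂) + (b/7)(C₁ + 2C₂ + 3E₃)`. -/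
noncomputable def vec12 (a b : ℤ) : Fin 12 → ℚ :=
  ((1 : ℚ) / 7) • (Pi.single 0 1 + 2 • Pi.single 1 1 + 3 • Pi.single 9 1)
    + ((a : ℚ) / 7) • (Pi.single 3 1 + 2 • Pi.single 4 1 + 3 • Pi.single 10 1)
    + ((b : ℚ) / 7) • (Pi.single 6 1 + 2 • Pi.single 7 1 + 3 • Pi.single 11 1)

private lemma bform12_single (i j : Fin 12) :
    bform12 (Pi.single i 1) (Pi.single j 1) = gram12 i j := by
  exact Matrix.toLinearMap₂'Aux_single (RingHom.id ℚ) (RingHom.id ℚ) gram12 i j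

private lemma bform12_single' (c : ℚ) (i j : Fin 12) :
    bform12 (Pi.single i c) (Pi.single j 1) = c * gram12 i j := by
  have h : (Pi.single i c : Fin 12 → ℚ) = c • (Pi.single i 1 : Fin 12 → ℚ) := by
    rw [← Pi.single_smul, smul_eq_mul, mul_one]
  rw [h, map_smul, LinearMap.smul_apply, bform12_single, smul_eq_mul]

private lemma ev12_0 (a b : ℤ) :
    bform12 (vec12 a b) (Pi.single 0 1) = 0 := by
  simp only [vec12, ← Pi.single_smul, map_add, LinearMap.add_apply,
    map_smul, LinearMap.smul_apply, smul_eq_mul, bform12_single',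
    show gram12 0 0 = -2 from rfl, show gram12 1 0 = 1 from rfl, show gram12 9 0 = 0 from rfl, show gram12 3 0 = 0 from rfl, show gram12 4 0 = 0 from rfl, show gram12 10 0 = 0 from rfl, show gram12 6 0 = 0 from rfl, show gram12 7 0 = 0 from rfl, show gram12 11 0 = 0 from rfl]
  norm_num
  try ring

private lemma ev12_1 (a b : ℤ) :
    bform12 (vec12 a b) (Pi.single 1 1) = 0 := by
  simp only [vec12, ← Pi.single_smul, map_add, LinearMap.add_apply,
    map_smul, LinearMap.smul_apply, smul_eq_mul, bform12_single',
    show gram12 0 1 = 1 from rfl, show gram12 1 1 = -2 from rfl, show gram12 9 1 = 1 from rfl, show gram12 3 1 = 0 from rfl, show gram12 4 1 = 0 from rfl, show gram12 10 1 = 0 from rfl, show gram12 6 1 = 0 from rfl, show gram12 7 1 = 0 from rfl, show gram12 11 1 = 0 from rfl]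
  norm_num
  try ring

private lemma ev12_2 (a b : ℤ) :
    bform12 (vec12 a b) (Pi.single 2 1) = (8 + 7*a + 3*b)/7 := by
  simp only [vec12, ← Pi.single_smul, map_add, LinearMap.add_apply,
    map_smul, LinearMap.smul_apply, smul_eq_mul, bform12_single',
    show gram12 0 2 = 0 from rfl, show gram12 1 2 = 1 from rfl, show gram12 9 2 = 2 from rfl, show gram12 3 2 = 1 from rfl, show gram12 4 2 = 0 from rfl, show gram12 10 2 = 2 from rfl, show gram12 6 2 = 0 from rfl, show gram12 7 2 = 0 from rfl, show gram12 11 2 = 1 from rfl]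
  norm_num
  try ring

private lemma ev12_3 (a b : ℤ) :
    bform12 (vec12 a b) (Pi.single 3 1) = 0 := by
  simp only [vec12, ← Pi.single_smul, map_add, LinearMap.add_apply,
    map_smul, LinearMap.smul_apply, smul_eq_mul, bform12_single',
    show gram12 0 3 = 0 from rfl, show gram12 1 3 = 0 from rfl, show gram12 9 3 = 0 from rfl, show gram12 3 3 = -2 from rfl, show gram12 4 3 = 1 from rfl, show gram12 10 3 = 0 from rfl, show gram12 6 3 = 0 from rfl, show gram12 7 3 = 0 from rfl, show gram12 11 3 = 0 from rfl]
  norm_num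
  try ring

private lemma ev12_4 (a b : ℤ) :
    bform12 (vec12 a b) (Pi.single 4 1) = 0 := by
  simp only [vec12, ← Pi.single_smul, map_add, LinearMap.add_apply,
    map_smul, LinearMap.smul_apply, smul_eq_mul, bform12_single',
    show gram12 0 4 = 0 from rfl, show gram12 1 4 = 0 from rfl, show gram12 9 4 = 0 from rfl, show gram12 3 4 = 1 from rfl, show gram12 4 4 = -2 from rfl, show gram12 10 4 = 1 from rfl, show gram12 6 4 = 0 from rfl, show gram12 7 4 = 0 from rfl, show gram12 11 4 = 0 from rfl]
  norm_num
  try ring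

private lemma ev12_5 (a b : ℤ) :
    bform12 (vec12 a b) (Pi.single 5 1) = (3 + 8*a + 7*b)/7 := by
  simp only [vec12, ← Pi.single_smul, map_add, LinearMap.add_apply,
    map_smul, LinearMap.smul_apply, smul_eq_mul, bform12_single',
    show gram12 0 5 = 0 from rfl, show gram12 1 5 = 0 from rfl, show gram12 9 5 = 1 from rfl, show gram12 3 5 = 0 from rfl, show gram12 4 5 = 1 from rfl, show gram12 10 5 = 2 from rfl, show gram12 6 5 = 1 from rfl, show gram12 7 5 = 0 from rfl, show gram12 11 5 = 2 from rfl]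
  norm_num
  try ring

private lemma ev12_6 (a b : ℤ) :
    bform12 (vec12 a b) (Pi.single 6 1) = 0 := by
  simp only [vec12, ← Pi.single_smul, map_add, LinearMap.add_apply,
    map_smul, LinearMap.smul_apply, smul_eq_mul, bform12_single',
    show gram12 0 6 = 0 from rfl, show gram12 1 6 = 0 from rfl, show gram12 9 6 = 0 from rfl, show gram12 3 6 = 0 from rfl, show gram12 4 6 = 0 from rfl, show gram12 10 6 = 0 from rfl, show gram12 6 6 = -2 from rfl, show gram12 7 6 = 1 from rfl, show gram12 11 6 = 0 from rfl]
  norm_num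
  try ring

private lemma ev12_7 (a b : ℤ) :
    bform12 (vec12 a b) (Pi.single 7 1) = 0 := by
  simp only [vec12, ← Pi.single_smul, map_add, LinearMap.add_apply,
    map_smul, LinearMap.smul_apply, smul_eq_mul, bform12_single',
    show gram12 0 7 = 0 from rfl, show gram12 1 7 = 0 from rfl, show gram12 9 7 = 0 from rfl, show gram12 3 7 = 0 from rfl, show gram12 4 7 = 0 from rfl, show gram12 10 7 = 0 from rfl, show gram12 6 7 = 1 from rfl, show gram12 7 7 = -2 from rfl, show gram12 11 7 = 1 from rfl]
  norm_num
  try ring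

private lemma ev12_8 (a b : ℤ) :
    bform12 (vec12 a b) (Pi.single 8 1) = (7 + 3*a + 8*b)/7 := by
  simp only [vec12, ← Pi.single_smul, map_add, LinearMap.add_apply,
    map_smul, LinearMap.smul_apply, smul_eq_mul, bform12_single',
    show gram12 0 8 = 1 from rfl, show gram12 1 8 = 0 from rfl, show gram12 9 8 = 2 from rfl, show gram12 3 8 = 0 from rfl, show gram12 4 8 = 0 from rfl, show gram12 10 8 = 1 from rfl, show gram12 6 8 = 0 from rfl, show gram12 7 8 = 1 from rfl, show gram12 11 8 = 2 from rfl]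
  norm_num
  try ring

private lemma ev12_9 (a b : ℤ) :
    bform12 (vec12 a b) (Pi.single 9 1) = -1 := by
  simp only [vec12, ← Pi.single_smul, map_add, LinearMap.add_apply,
    map_smul, LinearMap.smul_apply, smul_eq_mul, bform12_single',
    show gram12 0 9 = 0 from rfl, show gram12 1 9 = 1 from rfl, show gram12 9 9 = -3 from rfl, show gram12 3 9 = 0 from rfl, show gram12 4 9 = 0 from rfl, show gram12 10 9 = 0 from rfl, show gram12 6 9 = 0 from rfl, show gram12 7 9 = 0 from rfl, show gram12 11 9 = 0 from rfl]
  norm_num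
  try ring

private lemma ev12_10 (a b : ℤ) :
    bform12 (vec12 a b) (Pi.single 10 1) = -a := by
  simp only [vec12, ← Pi.single_smul, map_add, LinearMap.add_apply,
    map_smul, LinearMap.smul_apply, smul_eq_mul, bform12_single',
    show gram12 0 10 = 0 from rfl, show gram12 1 10 = 0 from rfl, show gram12 9 10 = 0 from rfl, show gram12 3 10 = 0 from rfl, show gram12 4 10 = 1 from rfl, show gram12 10 10 = -3 from rfl, show gram12 6 10 = 0 from rfl, show gram12 7 10 = 0 from rfl, show gram12 11 10 = 0 from rfl]
  norm_num
  try ring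

private lemma ev12_11 (a b : ℤ) :
    bform12 (vec12 a b) (Pi.single 11 1) = -b := by
  simp only [vec12, ← Pi.single_smul, map_add, LinearMap.add_apply,
    map_smul, LinearMap.smul_apply, smul_eq_mul, bform12_single',
    show gram12 0 11 = 0 from rfl, show gram12 1 11 = 0 from rfl, show gram12 9 11 = 0 from rfl, show gram12 3 11 = 0 from rfl, show gram12 4 11 = 0 from rfl, show gram12 10 11 = 0 from rfl, show gram12 6 11 = 0 from rfl, show gram12 7 11 = 1 from rfl, show gram12 11 11 = -3 from rfl]
  norm_num
  try ring

/-- `B(v, x) ∈ ℤ` for all twelve basis vectors `x` if and only if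
`a ≡ 4 (mod 7)` and `b ≡ 2 (mod 7)`. -/
theorem fake_plane_stmt12 (a b : ℤ) :
    (∀ x : Fin 12, ∃ m : ℤ, bform12 (vec12 a b) (Pi.single x 1) = m) ↔
      (a ≡ 4 [ZMOD 7] ∧ b ≡ 2 [ZMOD 7]) := by
  constructor
  · intro h
    obtain ⟨m, hm⟩ := h 2
    obtain ⟨n, hn⟩ := h 5
    rw [ev12_2] at hm
    rw [ev12_5] at hn
    have hm' : (8 + 7*a + 3*b : ℤ) = 7 * m := by
      have : (8 + 7*a + 3*b : ℚ) = 7 * m := by field_simp at hm; linarith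
      exact_mod_cast this
    have hn' : (3 + 8*a + 7*b : ℤ) = 7 * n := by
      have : (3 + 8*a + 7*b : ℚ) = 7 * n := by field_simp at hn; linarith
      exact_mod_cast this
    constructor <;> · unfold Int.ModEq; omega
  · rintro ⟨ha, hb⟩
    unfold Int.ModEq at ha hb
    obtain ⟨k, hk⟩ : ∃ k, a = 7*k + 4 := ⟨(a-4)/7, by omega⟩
    obtain ⟨l, hl⟩ : ∃ l, b = 7*l + 2 := ⟨(b-2)/7, by omega⟩
    intro x
    fin_cases x
    · exact ⟨0, by show bform12 (vec12 a b) (Pi.single 0 1) = _; rw [ev12_0]; norm_num⟩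
    · exact ⟨0, by show bform12 (vec12 a b) (Pi.single 1 1) = _; rw [ev12_1]; norm_num⟩
    · exact ⟨2 + a + 3*l, by
        show bform12 (vec12 a b) (Pi.single 2 1) = _; rw [ev12_2, hl]; push_cast; ring⟩
    · exact ⟨0, by show bform12 (vec12 a b) (Pi.single 3 1) = _; rw [ev12_3]; norm_num⟩
    · exact ⟨0, by show bform12 (vec12 a b) (Pi.single 4 1) = _; rw [ev12_4]; norm_num⟩
    · exact ⟨5 + 8*k + b, by
        show bform12 (vec12 a b) (Pi.single 5 1) = _; rw [ev12_5, hk]; push_cast; ring⟩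
    · exact ⟨0, by show bform12 (vec12 a b) (Pi.single 6 1) = _; rw [ev12_6]; norm_num⟩
    · exact ⟨0, by show bform12 (vec12 a b) (Pi.single 7 1) = _; rw [ev12_7]; norm_num⟩
    · exact ⟨5 + 3*k + 8*l, by
        show bform12 (vec12 a b) (Pi.single 8 1) = _; rw [ev12_8, hk, hl]; push_cast; ring⟩
    · exact ⟨-1, by show bform12 (vec12 a b) (Pi.single 9 1) = _; rw [ev12_9]; norm_num⟩
    · exact ⟨-a, by show bform12 (vec12 a b) (Pi.single 10 1) = _; rw [ev12_10]; norm_num⟩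
    · exact ⟨-b, by show bform12 (vec12 a b) (Pi.single 11 1) = _; rw [ev12_11]; norm_num⟩
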